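/- Let C be a right Markov code for (X_A, σ_A) with associated matrix A(C) = B and standard coding homeomorphism h : X_A → X_B. Then there exist continuous maps k_1, l_1 : X_A → ℤ_{≥0} such that σ_B^{k_1(x)}(h(σ_A(x))) = σ_B^{l_1(x)}(h(x)) for all x ∈ X_A. -/

import Mathlib

namespace TMS

/-- A `{0,1}` transition matrix on `N` symbols, as a `Bool`-valued function. -/
abbrev Mat (N : ℕ) := Fin N → Fin N → Bool

/-- A finite word is (locally) admissible: all consecutive transitions are allowed. -/
def Adm {N : ℕ} (A : Mat N) (w : List (Fin N)) : Prop :=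
  List.Chain' (fun a b => A a b = true) w

instance {N : ℕ} (A : Mat N) (w : List (Fin N)) : Decidable (Adm A w) :=
  inferInstanceAs (Decidable (List.IsChain _ w))

/-- The one-sided shift space `X_A`. -/
def SSpace {N : ℕ} (A : Mat N) : Set (ℕ → Fin N) :=
  {x | ∀ n, A (x n) (x (n + 1)) = true}

/-- The shift on sequences. -/
def shift {N : ℕ} (x : ℕ → Fin N) : ℕ → Fin N := fun n => x (n + 1)

/-- The shift as a self-map of the shift space. -/
def shiftS {N : ℕ} (A : Mat N) (x : ↥(SSpace A)) : ↥(SSpace A) :=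
  ⟨shift x.1, fun n => x.2 (n + 1)⟩

/-- `x` begins with the finite word `w`. -/
def Begins {N : ℕ} (x : ℕ → Fin N) (w : List (Fin N)) : Prop :=
  ∀ i (h : i < w.length), x i = w.get ⟨i, h⟩

/-- A word belongs to `B_*(X_A)`: it occurs at the beginning of some point of `X_A`. -/
def AdmX {N : ℕ} (A : Mat N) (w : List (Fin N)) : Prop :=
  ∃ x ∈ SSpace A, Begins x w

/-- The cylinder set `U_w ⊂ X_A`. -/
def Cyl {N : ℕ} (A : Mat N) (w : List (Fin N)) : Set (ℕ → Fin N) :=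
  {x ∈ SSpace A | Begins x w}

/-- A finite family of words is a prefix code: the words are pairwise distinct and
no word is an initial segment of another. -/
def IsPrefixCode {N M : ℕ} (ω : Fin M → List (Fin N)) : Prop :=
  Function.Injective ω ∧ ∀ i j : Fin M, i ≠ j → ¬ (ω i <+: ω j)

/-- Starting position of the `n`-th block in the factorization of a point along
the index sequence `f`. -/
def pos {N M : ℕ} (ω : Fin M → List (Fin N)) (f : ℕ → Fin M) : ℕ → ℕ
  | 0 => 0
  | n + 1 => pos ω f n + (ω (f n)).length

/-- The point `x` factors as the infinite concatenation `ω (f 0) ω (f 1) ⋯`. -/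
def Factors {N M : ℕ} (ω : Fin M → List (Fin N)) (x : ℕ → Fin N) (f : ℕ → Fin M) : Prop :=
  ∀ n, Begins (fun k => x (pos ω f n + k)) (ω (f n))

/-- Matrix irreducibility: from any symbol there is an admissible path to any other. -/
def IrreducibleMat {N : ℕ} (A : Mat N) : Prop :=
  ∀ i j : Fin N, ∃ w : List (Fin N), Adm A (i :: (w ++ [j]))

/-- Permutation matrix: every row and every column has exactly one nonzero entry. -/
def IsPermMat {N : ℕ} (A : Mat N) : Prop :=
  (∀ i, ∃! j, A i j = true) ∧ (∀ j, ∃! i, A i j = true)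

/-- A right Markov code for `(X_A, σ_A)`: a prefix code of nonempty admissible words
with the unique factorization property, shift invariance, and irreducibility. -/
structure IsRightMarkovCode {N M : ℕ} (A : Mat N) (ω : Fin M → List (Fin N)) : Prop where
  adm : ∀ i, AdmX A (ω i)
  ne : ∀ i, ω i ≠ []
  prefixCode : IsPrefixCode ω
  uniqueFact : ∀ γ, AdmX A γ → ∃ η, AdmX A (γ ++ η) ∧
      ∃! l : List (Fin M), γ ++ η = (l.map ω).flatten
  shiftInv : ∃ L : ℕ, 0 < L ∧ ∀ l : List (Fin M), l.length = L → AdmX A ((l.map ω).flatten) →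
      ∃ l' : List (Fin M), ((l.map ω).flatten).tail = (l'.map ω).flatten
  irr : ∀ i j, ∃ l : List (Fin M), AdmX A (ω i ++ (l.map ω).flatten ++ ω j)

/-- The induced matrix `A(C)`: `A(C)(i,j) = 1` iff `ω i ω j` is admissible. -/
def matC {N M : ℕ} (A : Mat N) (ω : Fin M → List (Fin N)) : Mat M :=
  fun i j => decide (Adm A (ω i ++ ω j))

/-- Continuous orbit equivalence of one-sided topological Markov shifts. -/
def COE {N N' : ℕ} (A : Mat N) (B : Mat N') : Prop :=
  ∃ h : ↥(SSpace A) ≃ₜ ↥(SSpace B),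
    (∃ k₁ l₁ : ↥(SSpace A) → ℕ, Continuous k₁ ∧ Continuous l₁ ∧
      ∀ x, (shiftS B)^[k₁ x] (h (shiftS A x)) = (shiftS B)^[l₁ x] (h x)) ∧
    (∃ k₂ l₂ : ↥(SSpace B) → ℕ, Continuous k₂ ∧ Continuous l₂ ∧
      ∀ y, (shiftS A)^[k₂ y] (h.symm (shiftS B y)) = (shiftS A)^[l₂ y] (h.symm y))


section Aux

open Classical

variable {N M : ℕ}

lemma shiftS_iter_apply (A : Mat N) (k : ℕ) (x : ↥(SSpace A)) (n : ℕ) :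
    ((shiftS A)^[k] x).1 n = x.1 (n + k) := by
  induction k generalizing x with
  | zero => rfl
  | succ k ih =>
    rw [Function.iterate_succ_apply, ih]
    rfl

lemma begins_getElem {x : ℕ → Fin N} {w : List (Fin N)} (h : Begins x w) {i : ℕ}
    (hi : i < w.length) : x i = w[i] := by
  simpa [List.get_eq_getElem] using h i hi

lemma begins_of_prefix {x : ℕ → Fin N} {w u : List (Fin N)} (h : Begins x w)
    (hu : u <+: w) : Begins x u := by
  intro i hi
  rw [List.get_eq_getElem, begins_getElem h (lt_of_lt_of_le hi hu.length_le)]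
  exact (hu.getElem hi).symm

lemma begins_prefix_of_le {x : ℕ → Fin N} {u v : List (Fin N)} (hu : Begins x u)
    (hv : Begins x v) (h : u.length ≤ v.length) : u <+: v := by
  rw [List.prefix_iff_eq_take]
  apply List.ext_getElem
  · simp [Nat.min_eq_left h]
  · intro i h1 h2
    rw [List.getElem_take, ← begins_getElem hu h1,
      begins_getElem hv (lt_of_lt_of_le h1 h)]

lemma begins_append {x : ℕ → Fin N} {u v : List (Fin N)} (hu : Begins x u)
    (hv : Begins (fun k => x (u.length + k)) v) : Begins x (u ++ v) := by
  intro i hi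
  rw [List.get_eq_getElem]
  by_cases h : i < u.length
  · rw [List.getElem_append_left h]
    exact begins_getElem hu h
  · push_neg at h
    rw [List.getElem_append_right h]
    have hlt : i - u.length < v.length := by
      have := hi; simp only [List.length_append] at this; omega
    have := begins_getElem hv hlt
    rw [← this]
    congr 1
    omega

lemma adm_of_begins {A : Mat N} {x : ℕ → Fin N} (hx : x ∈ SSpace A) {w : List (Fin N)}
    (h : Begins x w) : Adm A w := by
  rw [Adm, List.Chain', List.isChain_iff_getElem]
  intro i hi
  rw [← begins_getElem h (by omega), ← begins_getElem h (by omega)]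
  exact hx i

variable {A : Mat N} {ω : Fin M → List (Fin N)}

lemma exists_first (hC : IsRightMarkovCode A ω) (x : ↥(SSpace A)) :
    ∃ i, Begins x.1 (ω i) := by
  set n := (Finset.univ.sup fun i : Fin M => (ω i).length) + 1 with hn
  set γ := List.ofFn (fun k : Fin n => x.1 k) with hγ
  have hbeg : Begins x.1 γ := by
    intro i hi
    rw [List.get_eq_getElem]
    exact (List.getElem_ofFn (f := fun k : Fin n => x.1 k) (i := i) (by simpa [hγ] using hi)).symm
  have hadm : AdmX A γ := ⟨x.1, x.2, hbeg⟩
  obtain ⟨η, hγη, l, hl, -⟩ := hC.uniqueFact γ hadm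
  match l with
  | [] =>
    exfalso
    simp only [List.map_nil, List.flatten_nil, List.append_eq_nil_iff] at hl
    have : γ.length = 0 := by rw [hl.1]; rfl
    rw [hγ, List.length_ofFn] at this
    omega
  | i :: l' =>
    refine ⟨i, ?_⟩
    have hpre : ω i <+: γ ++ η := by
      rw [hl]
      simp only [List.map_cons, List.flatten_cons]
      exact List.prefix_append _ _
    have hlen : (ω i).length ≤ γ.length := by
      have h1 : (ω i).length ≤ Finset.univ.sup fun i : Fin M => (ω i).length :=
        Finset.le_sup (f := fun i : Fin M => (ω i).length) (Finset.mem_univ i)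
      rw [hγ, List.length_ofFn]
      omega
    exact begins_of_prefix hbeg
      (List.prefix_of_prefix_length_le hpre (List.prefix_append γ η) hlen)

lemma first_unique (hC : IsRightMarkovCode A ω) {x : ℕ → Fin N} {i j : Fin M}
    (hi : Begins x (ω i)) (hj : Begins x (ω j)) : i = j := by
  by_contra hne
  rcases le_total (ω i).length (ω j).length with h | h
  · exact hC.prefixCode.2 i j hne (begins_prefix_of_le hi hj h)
  · exact hC.prefixCode.2 j i (Ne.symm hne) (begins_prefix_of_le hj hi h)

noncomputable def firstIdx (hC : IsRightMarkovCode A ω) (x : ↥(SSpace A)) : Fin M :=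
  (exists_first hC x).choose

lemma firstIdx_spec (hC : IsRightMarkovCode A ω) (x : ↥(SSpace A)) :
    Begins x.1 (ω (firstIdx hC x)) := (exists_first hC x).choose_spec

lemma firstIdx_eq (hC : IsRightMarkovCode A ω) {x : ↥(SSpace A)} {i : Fin M}
    (h : Begins x.1 (ω i)) : firstIdx hC x = i :=
  first_unique hC (firstIdx_spec hC x) h

noncomputable def dropStep (hC : IsRightMarkovCode A ω) (x : ↥(SSpace A)) : ↥(SSpace A) :=
  (shiftS A)^[(ω (firstIdx hC x)).length] x

noncomputable def iterDrop (hC : IsRightMarkovCode A ω) (n : ℕ) (x : ↥(SSpace A)) :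
    ↥(SSpace A) := (dropStep hC)^[n] x

noncomputable def Fc (hC : IsRightMarkovCode A ω) (x : ↥(SSpace A)) (n : ℕ) : Fin M :=
  firstIdx hC (iterDrop hC n x)

lemma iterDrop_succ (hC : IsRightMarkovCode A ω) (n : ℕ) (x : ↥(SSpace A)) :
    iterDrop hC (n + 1) x = dropStep hC (iterDrop hC n x) :=
  Function.iterate_succ_apply' _ _ _

lemma dropStep_apply (hC : IsRightMarkovCode A ω) (x : ↥(SSpace A)) (k : ℕ) :
    (dropStep hC x).1 k = x.1 (k + (ω (firstIdx hC x)).length) :=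
  shiftS_iter_apply A _ x k

lemma iterDrop_apply (hC : IsRightMarkovCode A ω) (x : ↥(SSpace A)) (n k : ℕ) :
    (iterDrop hC n x).1 k = x.1 (k + pos ω (Fc hC x) n) := by
  induction n generalizing k with
  | zero => rfl
  | succ n ih =>
    rw [iterDrop_succ, dropStep_apply, ih]
    refine congrArg x.1 ?_
    show k + (ω (Fc hC x n)).length + pos ω (Fc hC x) n = k + pos ω (Fc hC x) (n + 1)
    have hp : pos ω (Fc hC x) (n + 1) = pos ω (Fc hC x) n + (ω (Fc hC x n)).length := rfl
    omega

lemma factors_Fc (hC : IsRightMarkovCode A ω) (x : ↥(SSpace A)) :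
    Factors ω x.1 (Fc hC x) := by
  intro n k hk
  have h1 := begins_getElem (firstIdx_spec hC (iterDrop hC n x)) (i := k) hk
  rw [iterDrop_apply] at h1
  show x.1 (pos ω (Fc hC x) n + k) = (ω (Fc hC x n)).get ⟨k, hk⟩
  rw [List.get_eq_getElem, Nat.add_comm]
  exact h1

lemma Fc_mem (hC : IsRightMarkovCode A ω) (x : ↥(SSpace A)) :
    Fc hC x ∈ SSpace (matC A ω) := by
  intro n
  show decide (Adm A (ω (Fc hC x n) ++ ω (Fc hC x (n + 1)))) = true
  rw [decide_eq_true_iff]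
  have h1 : Begins (iterDrop hC n x).1 (ω (Fc hC x n)) := firstIdx_spec hC _
  have h2 : Begins (fun k => (iterDrop hC n x).1 ((ω (Fc hC x n)).length + k))
      (ω (Fc hC x (n + 1))) := by
    intro k hk
    have h3 := begins_getElem (firstIdx_spec hC (iterDrop hC (n + 1) x)) (i := k) hk
    show (iterDrop hC n x).1 ((ω (Fc hC x n)).length + k) = (ω (Fc hC x (n + 1))).get ⟨k, hk⟩
    rw [List.get_eq_getElem]
    have h4 : (iterDrop hC (n + 1) x).1 k
        = (iterDrop hC n x).1 (k + (ω (Fc hC x n)).length) := by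
      rw [iterDrop_succ, dropStep_apply]
      rfl
    rw [Nat.add_comm ((ω (Fc hC x n)).length) k, ← h4]
    exact h3
  exact adm_of_begins (iterDrop hC n x).2 (begins_append h1 h2)

lemma factors_unique (hC : IsRightMarkovCode A ω) (x : ↥(SSpace A)) (f : ℕ → Fin M)
    (hf : Factors ω x.1 f) : Fc hC x = f := by
  have heq : ∀ i, Begins (iterDrop hC i x).1 (ω (f i)) → Fc hC x i = f i := by
    intro i h
    exact firstIdx_eq hC h
  have key : ∀ n, ∀ k, (iterDrop hC n x).1 k = x.1 (pos ω f n + k) := by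
    intro n
    induction n with
    | zero => intro k; show x.1 k = x.1 (0 + k); rw [Nat.zero_add]
    | succ n ih =>
      have hFn : Fc hC x n = f n := by
        apply heq
        intro k hk
        rw [ih k]
        exact hf n k hk
      intro k
      rw [iterDrop_succ, dropStep_apply]
      have : firstIdx hC (iterDrop hC n x) = f n := hFn
      rw [this, ih]
      refine congrArg x.1 ?_
      have hp : pos ω f (n + 1) = pos ω f n + (ω (f n)).length := rfl
      omega
  funext n
  apply heq
  intro k hk
  rw [key n k]
  exact hf n k hk

/-- Prefix of the infinite concatenation determined by the first `k` indices. -/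
def flatPre (ω : Fin M → List (Fin N)) (f : ℕ → Fin M) (k : ℕ) : List (Fin N) :=
  ((List.ofFn (fun j : Fin k => f j)).map ω).flatten

lemma flatPre_succ (f : ℕ → Fin M) (k : ℕ) :
    flatPre ω f (k + 1) = flatPre ω f k ++ ω (f k) := by
  unfold flatPre
  rw [List.ofFn_succ', List.concat_eq_append, List.map_append, List.flatten_append]
  simp

lemma length_flatPre (f : ℕ → Fin M) (k : ℕ) :
    (flatPre ω f k).length = pos ω f k := by
  induction k with
  | zero => simp [flatPre, pos]
  | succ k ih => rw [flatPre_succ, List.length_append, ih, pos]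

lemma length_le_flatten (hC : IsRightMarkovCode A ω) (l : List (Fin M)) :
    l.length ≤ ((l.map ω).flatten).length := by
  induction l with
  | nil => simp
  | cons a l ih =>
    simp only [List.map_cons, List.flatten_cons, List.length_append, List.length_cons]
    have : 0 < (ω a).length := List.length_pos_iff.mpr (hC.ne a)
    omega

lemma le_length_flatPre (hC : IsRightMarkovCode A ω) (f : ℕ → Fin M) (k : ℕ) :
    k ≤ (flatPre ω f k).length := by
  have := length_le_flatten hC (List.ofFn (fun j : Fin k => f j))
  rwa [List.length_ofFn] at this

lemma flatPre_prefix (f : ℕ → Fin M) {k m : ℕ} (h : k ≤ m) :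
    flatPre ω f k <+: flatPre ω f m := by
  induction m with
  | zero =>
    have : k = 0 := by omega
    subst this; exact List.prefix_rfl
  | succ m ih =>
    rcases Nat.lt_or_ge k (m + 1) with h' | h'
    · rw [flatPre_succ]
      exact (ih (by omega)).trans (List.prefix_append _ _)
    · have : k = m + 1 := by omega
      subst this; exact List.prefix_rfl

noncomputable def conc (hC : IsRightMarkovCode A ω) (f : ℕ → Fin M) (n : ℕ) : Fin N :=
  (flatPre ω f (n + 1))[n]'(Nat.lt_of_lt_of_le (Nat.lt_succ_self n)
    (le_length_flatPre hC f (n + 1)))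

lemma conc_eq (hC : IsRightMarkovCode A ω) (f : ℕ → Fin M) {n k : ℕ}
    (h : n < (flatPre ω f k).length) : conc hC f n = (flatPre ω f k)[n] := by
  rcases le_total (n + 1) k with h' | h'
  · exact (flatPre_prefix f h').getElem _
  · exact ((flatPre_prefix f h').getElem h).symm

lemma begins_flatPre {f : ℕ → Fin M} {x : ℕ → Fin N} (hf : Factors ω x f) (k : ℕ) :
    Begins x (flatPre ω f k) := by
  induction k with
  | zero => intro i hi; simp [flatPre] at hi
  | succ k ih =>
    rw [flatPre_succ]
    refine begins_append ih ?_
    intro j hj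
    have := hf k j hj
    simp only at this ⊢
    rw [← this, length_flatPre]

lemma adm_glue {a b c : List (Fin N)} (hab : Adm A (a ++ b)) (hbc : Adm A (b ++ c))
    (hb : b ≠ []) : Adm A ((a ++ b) ++ c) := by
  rw [Adm, List.Chain', List.isChain_append]
  obtain ⟨h1, h2, h3⟩ := List.isChain_append.mp hbc
  refine ⟨hab, h2, ?_⟩
  intro x hx y hy
  have hor : (b.getLast?).or a.getLast? = b.getLast? := by
    cases hb' : b.getLast? with
    | none => exact absurd (List.getLast?_eq_none_iff.mp hb') hb
    | some v => rfl
  rw [List.getLast?_append, hor] at hx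
  exact h3 x hx y hy

lemma adm_flatPre (hC : IsRightMarkovCode A ω) (g : ↥(SSpace (matC A ω))) (k : ℕ) :
    Adm A (flatPre ω g.1 k ++ ω (g.1 k)) := by
  have hg : ∀ m, Adm A (ω (g.1 m) ++ ω (g.1 (m + 1))) := by
    intro m
    have := g.2 m
    simpa [matC, decide_eq_true_iff] using this
  induction k with
  | zero =>
    have h0 : flatPre ω g.1 0 = [] := by simp [flatPre]
    rw [h0, List.nil_append]
    exact (hg 0).prefix (List.prefix_append _ _)
  | succ k ih =>
    rw [flatPre_succ]
    exact adm_glue ih (hg k) (hC.ne _)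

lemma conc_mem (hC : IsRightMarkovCode A ω) (g : ↥(SSpace (matC A ω))) :
    conc hC g.1 ∈ SSpace A := by
  intro n
  have hadm : Adm A (flatPre ω g.1 (n + 2)) :=
    (adm_flatPre hC g (n + 2)).prefix (List.prefix_append _ _)
  have hlen : n + 2 ≤ (flatPre ω g.1 (n + 2)).length := le_length_flatPre hC _ _
  rw [conc_eq hC g.1 (k := n + 2) (by omega), conc_eq hC g.1 (k := n + 2) (by omega)]
  have := (List.isChain_iff_getElem.mp hadm) n (by omega)
  simpa [List.get_eq_getElem] using this

lemma factors_conc (hC : IsRightMarkovCode A ω) (g : ↥(SSpace (matC A ω))) :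
    Factors ω (conc hC g.1) g.1 := by
  intro n k hk
  have hlen : (flatPre ω g.1 (n + 1)).length = pos ω g.1 n + (ω (g.1 n)).length := by
    rw [length_flatPre, pos]
  have hlt : pos ω g.1 n + k < (flatPre ω g.1 (n + 1)).length := by omega
  simp only [List.get_eq_getElem]
  rw [conc_eq hC g.1 hlt]
  have hidx : pos ω g.1 n + k - (flatPre ω g.1 n).length = k := by
    rw [length_flatPre]; omega
  have h1 : (flatPre ω g.1 (n + 1))[pos ω g.1 n + k]'hlt = (ω (g.1 n))[k]'hk := by
    rw [List.getElem_of_eq (flatPre_succ g.1 n),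
      List.getElem_append_right (by rw [length_flatPre]; exact Nat.le_add_right _ _)]
    simp only [hidx]
  exact h1

end Aux


section Topology

variable {N M : ℕ} {A : Mat N} {ω : Fin M → List (Fin N)}

lemma continuous_fiberwise {X Y : Type*} {ι : Type*} [TopologicalSpace X]
    [TopologicalSpace Y] (c : X → ι) (hc : ∀ i, IsOpen {x | c x = i}) (G : ι → X → Y)
    (hG : ∀ i, Continuous (G i)) : Continuous (fun x => G (c x) x) := by
  rw [continuous_def]
  intro U hU
  have he : (fun x => G (c x) x) ⁻¹' U = ⋃ i, {x | c x = i} ∩ G i ⁻¹' U := by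
    ext x
    simp only [Set.mem_preimage, Set.mem_iUnion, Set.mem_inter_iff, Set.mem_setOf_eq]
    constructor
    · intro h; exact ⟨c x, rfl, h⟩
    · rintro ⟨i, rfl, h2⟩; exact h2
  rw [he]
  exact isOpen_iUnion fun i => (hc i).inter ((hG i).isOpen_preimage U hU)

lemma isOpen_begins (A : Mat N) (w : List (Fin N)) :
    IsOpen {x : ↥(SSpace A) | Begins x.1 w} := by
  have he : {x : ↥(SSpace A) | Begins x.1 w}
      = ⋂ i : Fin w.length, (fun x : ↥(SSpace A) => x.1 i.1) ⁻¹' {w.get i} := by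
    ext x
    simp only [Set.mem_setOf_eq, Set.mem_iInter, Set.mem_preimage, Set.mem_singleton_iff]
    constructor
    · intro h i; exact h i.1 i.2
    · intro h i hi; exact h ⟨i, hi⟩
  rw [he]
  exact isOpen_iInter_of_finite fun i =>
    (isOpen_discrete _).preimage ((continuous_apply (i.1 : ℕ)).comp continuous_subtype_val)

lemma continuous_shiftS (A : Mat N) : Continuous (shiftS A) := by
  unfold shiftS
  refine Continuous.subtype_mk ?_ _
  unfold shift
  exact continuous_pi fun n => (continuous_apply (n + 1)).comp continuous_subtype_val

lemma isOpen_firstIdx_fiber (hC : IsRightMarkovCode A ω) (i : Fin M) :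
    IsOpen {x : ↥(SSpace A) | firstIdx hC x = i} := by
  have he : {x : ↥(SSpace A) | firstIdx hC x = i}
      = {x : ↥(SSpace A) | Begins x.1 (ω i)} := by
    ext x
    constructor
    · intro h; exact h ▸ firstIdx_spec hC x
    · intro h; exact firstIdx_eq hC h
  rw [he]
  exact isOpen_begins A (ω i)

lemma continuous_firstIdx (hC : IsRightMarkovCode A ω) : Continuous (firstIdx hC) :=
  continuous_fiberwise (firstIdx hC) (isOpen_firstIdx_fiber hC) (fun i _ => i)
    (fun _ => continuous_const)

lemma continuous_dropStep (hC : IsRightMarkovCode A ω) : Continuous (dropStep hC) :=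
  continuous_fiberwise (firstIdx hC) (isOpen_firstIdx_fiber hC)
    (fun i x => (shiftS A)^[(ω i).length] x)
    (fun _ => (continuous_shiftS A).iterate _)

lemma continuous_Fc (hC : IsRightMarkovCode A ω) (n : ℕ) :
    Continuous (fun x => Fc hC x n) :=
  (continuous_firstIdx hC).comp ((continuous_dropStep hC).iterate n)

noncomputable def hFun (hC : IsRightMarkovCode A ω) (x : ↥(SSpace A)) :
    ↥(SSpace (matC A ω)) := ⟨Fc hC x, Fc_mem hC x⟩

lemma continuous_hFun (hC : IsRightMarkovCode A ω) : Continuous (hFun hC) :=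
  Continuous.subtype_mk (continuous_pi fun n => continuous_Fc hC n) _

noncomputable def hInv (hC : IsRightMarkovCode A ω) (g : ↥(SSpace (matC A ω))) :
    ↥(SSpace A) := ⟨conc hC g.1, conc_mem hC g⟩

lemma continuous_conc_coord (hC : IsRightMarkovCode A ω) (n : ℕ) :
    Continuous (fun g : ↥(SSpace (matC A ω)) => conc hC g.1 n) := by
  have hc : ∀ v : Fin (n + 1) → Fin M,
      IsOpen {g : ↥(SSpace (matC A ω)) | (fun j : Fin (n + 1) => g.1 j.1) = v} := by
    intro v
    have he : {g : ↥(SSpace (matC A ω)) | (fun j : Fin (n + 1) => g.1 j.1) = v}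
        = ⋂ j : Fin (n + 1), (fun g : ↥(SSpace (matC A ω)) => g.1 j.1) ⁻¹' {v j} := by
      ext g
      simp only [Set.mem_setOf_eq, Set.mem_iInter, Set.mem_preimage, Set.mem_singleton_iff]
      exact ⟨fun h j => congrFun h j, funext⟩
    rw [he]
    exact isOpen_iInter_of_finite fun j =>
      (isOpen_discrete _).preimage ((continuous_apply (j.1 : ℕ)).comp continuous_subtype_val)
  exact continuous_fiberwise
    (fun g : ↥(SSpace (matC A ω)) => (fun j : Fin (n + 1) => g.1 j.1)) hc
    (fun v _ => (((List.ofFn v).map ω).flatten)[n]'(by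
      have := length_le_flatten hC (List.ofFn v)
      rw [List.length_ofFn] at this
      omega))
    (fun _ => continuous_const)

noncomputable def hHom (hC : IsRightMarkovCode A ω) :
    ↥(SSpace A) ≃ₜ ↥(SSpace (matC A ω)) where
  toFun := hFun hC
  invFun := hInv hC
  left_inv := by
    intro x
    apply Subtype.ext
    funext n
    show conc hC (Fc hC x) n = x.1 n
    have hb := begins_flatPre (factors_Fc hC x) (n + 1)
    have hlen : n < (flatPre ω (Fc hC x) (n + 1)).length :=
      Nat.lt_of_lt_of_le (Nat.lt_succ_self n) (le_length_flatPre hC _ _)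
    exact (begins_getElem hb hlen).symm
  right_inv := by
    intro g
    apply Subtype.ext
    exact factors_unique hC (hInv hC g) g.1 (factors_conc hC g)
  continuous_toFun := continuous_hFun hC
  continuous_invFun :=
    Continuous.subtype_mk (continuous_pi fun n => continuous_conc_coord hC n) _

lemma pos_add (f : ℕ → Fin M) (L m : ℕ) :
    pos ω f (L + m) = pos ω f L + pos ω (fun j => f (L + j)) m := by
  induction m with
  | zero => rfl
  | succ m ih =>
    have h1 : pos ω f (L + (m + 1)) = pos ω f (L + m) + (ω (f (L + m))).length := rfl
    have h2 : pos ω (fun j => f (L + j)) (m + 1)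
        = pos ω (fun j => f (L + j)) m + (ω (f (L + m))).length := rfl
    rw [h1, h2, ih]
    omega

lemma factors_shift_blocks {f : ℕ → Fin M} {y : ℕ → Fin N} (hf : Factors ω y f) (L : ℕ) :
    Factors ω (fun k => y (pos ω f L + k)) (fun m => f (L + m)) := by
  intro m k hk
  have h := hf (L + m) k hk
  show y (pos ω f L + (pos ω (fun j => f (L + j)) m + k)) = _
  rw [show pos ω f L + (pos ω (fun j => f (L + j)) m + k) = pos ω f (L + m) + k by
    rw [pos_add f L m]; omega]
  exact h

lemma factors_glue (hC : IsRightMarkovCode A ω) {y : ℕ → Fin N} {l : List (Fin M)}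
    {f' : ℕ → Fin M} (hy : Begins y ((l.map ω).flatten))
    (hf' : Factors ω (fun k => y (((l.map ω).flatten).length + k)) f') :
    Factors ω y (fun m => if h : m < l.length then l.get ⟨m, h⟩ else f' (m - l.length)) := by
  set g := fun m => if h : m < l.length then l.get ⟨m, h⟩ else f' (m - l.length) with hg
  have claim1 : ∀ m, m ≤ l.length → pos ω g m = (((l.map ω).take m).flatten).length := by
    intro m
    induction m with
    | zero => intro _; simp [pos]
    | succ m ih =>
      intro hm
      have hm' : m < l.length := by omega
      have hmm : m < (l.map ω).length := by simpa using hm'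
      have h1 : pos ω g (m + 1) = pos ω g m + (ω (g m)).length := rfl
      have h2 : g m = l[m] := by
        simp only [hg]
        rw [dif_pos hm', List.get_eq_getElem]
      have h4 : (l.map ω).take (m + 1) = (l.map ω).take m ++ [ω l[m]] := by
        rw [List.take_succ, List.getElem?_eq_getElem hmm]
        simp
      rw [h1, ih (by omega), h2, h4, List.flatten_append, List.length_append]
      simp
  have claim2 : ∀ m, pos ω g (l.length + m)
      = ((l.map ω).flatten).length + pos ω f' m := by
    intro m
    induction m with
    | zero =>
      have h0 := claim1 l.length le_rfl
      have h6 : (l.map ω).take l.length = l.map ω :=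
        List.take_of_length_le (by simp)
      rw [Nat.add_zero, h0, h6]
      rfl
    | succ m ih =>
      have h1 : pos ω g (l.length + (m + 1))
          = pos ω g (l.length + m) + (ω (g (l.length + m))).length := rfl
      have h2 : g (l.length + m) = f' m := by
        simp only [hg]
        rw [dif_neg (by omega)]
        congr 1
        omega
      have h3 : pos ω f' (m + 1) = pos ω f' m + (ω (f' m)).length := rfl
      rw [h1, h2, ih, h3]
      omega
  intro m k hk
  rcases Nat.lt_or_ge m l.length with hm | hm
  · have hgm : g m = l[m] := by
      simp only [hg]
      rw [dif_pos hm, List.get_eq_getElem]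
    have hdec : (l.map ω).flatten
        = ((l.map ω).take m).flatten ++ (ω l[m] ++ ((l.map ω).drop (m + 1)).flatten) := by
      conv_lhs => rw [← List.take_append_drop m (l.map ω),
        List.drop_eq_getElem_cons (l := l.map ω) (i := m) (by simpa using hm)]
      rw [List.flatten_append, List.flatten_cons, List.getElem_map]
    have hkk : k < (ω l[m]).length := by rw [← hgm]; exact hk
    have hT : (((l.map ω).take m).flatten).length + k < ((l.map ω).flatten).length := by
      rw [hdec]
      simp only [List.length_append]
      omega
    have h1 := begins_getElem hy hT
    show y (pos ω g m + k) = (ω (g m)).get ⟨k, hk⟩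
    rw [claim1 m (le_of_lt hm), h1]
    simp only [List.get_eq_getElem, hgm]
    rw [List.getElem_of_eq hdec, List.getElem_append_right (Nat.le_add_right _ _)]
    simp only [Nat.add_sub_cancel_left]
    rw [List.getElem_append_left hkk]
  · have hgm : g m = f' (m - l.length) := by
      simp only [hg]
      rw [dif_neg (by omega)]
    have hpos : pos ω g m = ((l.map ω).flatten).length + pos ω f' (m - l.length) := by
      have h0 := claim2 (m - l.length)
      rw [show l.length + (m - l.length) = m by omega] at h0
      exact h0
    have hkk : k < (ω (f' (m - l.length))).length := by rw [← hgm]; exact hk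
    have h2 := hf' (m - l.length) k hkk
    show y (pos ω g m + k) = (ω (g m)).get ⟨k, hk⟩
    rw [hpos]
    simp only [List.get_eq_getElem, hgm]
    rw [show ((l.map ω).flatten).length + pos ω f' (m - l.length) + k
        = ((l.map ω).flatten).length + (pos ω f' (m - l.length) + k) by omega]
    exact h2

end Topology

/-- For the standard coding homeomorphism `h : X_A → X_B` (`B = A(C)`)
there are continuous `k₁, l₁ : X_A → ℤ₊` with
`σ_B^{k₁(x)}(h(σ_A x)) = σ_B^{l₁(x)}(h x)` for all `x`. -/
theorem coding_orbit_maps_forward {N M : ℕ} (A : Mat N)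
    (hA : IrreducibleMat A) (hnp : ¬ IsPermMat A)
    (ω : Fin M → List (Fin N)) (hC : IsRightMarkovCode A ω) :
    ∃ h : ↥(SSpace A) ≃ₜ ↥(SSpace (matC A ω)),
      (∀ (x : ↥(SSpace A)) (f : ℕ → Fin M), Factors ω x.1 f → (h x).1 = f) ∧
      ∃ k₁ l₁ : ↥(SSpace A) → ℕ, Continuous k₁ ∧ Continuous l₁ ∧
        ∀ x, (shiftS (matC A ω))^[k₁ x] (h (shiftS A x)) =
          (shiftS (matC A ω))^[l₁ x] (h x) := by
  classical
  obtain ⟨L, hL, hsh⟩ := hC.shiftInv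
  refine ⟨hHom hC, ?_, ?_⟩
  · intro x f hf
    exact factors_unique hC x f hf
  set sel : (Fin L → Fin M) → List (Fin M) := fun v =>
    if h : AdmX A (((List.ofFn v).map ω).flatten) then
      (hsh (List.ofFn v) (List.length_ofFn (f := v)) h).choose
    else [] with hsel
  have hselspec : ∀ v, AdmX A (((List.ofFn v).map ω).flatten) →
      (((List.ofFn v).map ω).flatten).tail = (((sel v).map ω).flatten) := by
    intro v hv
    simp only [hsel]
    rw [dif_pos hv]
    exact (hsh (List.ofFn v) (List.length_ofFn (f := v)) hv).choose_spec
  refine ⟨fun x => (sel (fun j : Fin L => Fc hC x j)).length, fun _ => L, ?_,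
    continuous_const, ?_⟩
  · apply continuous_fiberwise (fun x => (fun j : Fin L => Fc hC x j))
      ?_ (fun v _ => (sel v).length) (fun v => continuous_const)
    intro v
    have he : {x : ↥(SSpace A) | (fun j : Fin L => Fc hC x j) = v}
        = ⋂ j : Fin L, (fun x : ↥(SSpace A) => Fc hC x j) ⁻¹' {v j} := by
      ext x
      simp only [Set.mem_setOf_eq, Set.mem_iInter, Set.mem_preimage, Set.mem_singleton_iff]
      exact ⟨fun h j => congrFun h j, funext⟩
    rw [he]
    exact isOpen_iInter_of_finite fun j =>
      (isOpen_discrete _).preimage (continuous_Fc hC j)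
  · intro x
    set vx : Fin L → Fin M := fun j => Fc hC x j with hvx
    set l' : List (Fin M) := sel vx with hl'
    have hflat : ((List.ofFn vx).map ω).flatten = flatPre ω (Fc hC x) L := rfl
    have hAdmX : AdmX A (((List.ofFn vx).map ω).flatten) := by
      rw [hflat]
      exact ⟨x.1, x.2, begins_flatPre (factors_Fc hC x) L⟩
    have htail : (flatPre ω (Fc hC x) L).tail = ((l'.map ω).flatten) := by
      rw [← hflat]
      exact hselspec vx hAdmX
    have hLpos : 1 ≤ (flatPre ω (Fc hC x) L).length :=
      le_trans hL (le_length_flatPre hC _ _)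
    have hy : Begins (shift x.1) ((l'.map ω).flatten) := by
      rw [← htail]
      intro i hi
      have hi' : i + 1 < (flatPre ω (Fc hC x) L).length := by
        rw [List.length_tail] at hi
        omega
      rw [List.get_eq_getElem, List.getElem_tail]
      exact begins_getElem (begins_flatPre (factors_Fc hC x) L) hi'
    have hlen' : ((l'.map ω).flatten).length + 1 = pos ω (Fc hC x) L := by
      have h5 : ((l'.map ω).flatten).length = (flatPre ω (Fc hC x) L).length - 1 := by
        rw [← htail, List.length_tail]
      rw [h5, ← length_flatPre]
      omega
    have hf' : Factors ω (fun k => shift x.1 (((l'.map ω).flatten).length + k))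
        (fun m => Fc hC x (L + m)) := by
      intro m k hk
      have h2 := factors_shift_blocks (factors_Fc hC x) L m k hk
      show x.1 (((l'.map ω).flatten).length + (pos ω (fun j => Fc hC x (L + j)) m + k) + 1)
        = _
      rw [show ((l'.map ω).flatten).length + (pos ω (fun j => Fc hC x (L + j)) m + k) + 1
          = pos ω (Fc hC x) L + (pos ω (fun j => Fc hC x (L + j)) m + k) by omega]
      exact h2
    have hgfac := factors_glue hC hy hf'
    have hFc : Fc hC (shiftS A x)
        = fun m => if h : m < l'.length then l'.get ⟨m, h⟩
          else Fc hC x (L + (m - l'.length)) := by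
      apply factors_unique hC (shiftS A x)
      exact hgfac
    apply Subtype.ext
    funext n
    rw [shiftS_iter_apply, shiftS_iter_apply]
    show Fc hC (shiftS A x) (n + l'.length) = Fc hC x (n + L)
    rw [hFc]
    show (if h : n + l'.length < l'.length then l'.get ⟨n + l'.length, h⟩
      else Fc hC x (L + (n + l'.length - l'.length))) = Fc hC x (n + L)
    rw [dif_neg (by omega)]
    congr 1
    omega

end TMS
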